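/- Let n ≥ 2. The inverse of the n×n matrix [L_B | 1] for the complete graph K_n equals (1/n)·M, where M has rows (e_i - e_{i+1})^T for 1 ≤ i ≤ n-1 (viewed in R^n with an appended structure) and last row consisting of all ones; explicitly, M_{ij} = 1 if i=j ≤ n-1, M_{ij} = -1 if j = i+1 ≤ n, M_{nj} = 1 for all j, and M_{ij}=0 otherwise. -/

import Mathlib

/-- The inverse of the matrix `[L_B | 1]` for the complete graph `K_n` is
`(1/n)·M`, where `M` has rows `(e_i - e_{i+1})ᵀ` for `1 ≤ i ≤ n-1` and last
row all ones. -/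
theorem complete_graph_appended_inverse {n : ℕ} (hn : 2 ≤ n)
    (B : Matrix (Fin n) (Fin n) ℚ)
    (hB : ∀ i (j : Fin n), B i j =
      if (j : ℕ) < n - 1 then
        (if (i : ℕ) ≤ (j : ℕ) then (n : ℚ) - 1 - (j : ℕ) else -((j : ℕ) + 1))
      else 1)
    (M : Matrix (Fin n) (Fin n) ℚ)
    (hM : ∀ i (j : Fin n), M i j =
      if (i : ℕ) = n - 1 then 1
      else if j = i then 1
      else if (j : ℕ) = (i : ℕ) + 1 then -1 else 0) :
    B * ((n : ℚ)⁻¹ • M) = 1 ∧ ((n : ℚ)⁻¹ • M) * B = 1 := by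
  have hn0 : (n : ℚ) ≠ 0 := Nat.cast_ne_zero.mpr (by omega)
  have key : M * B = (n : ℚ) • (1 : Matrix (Fin n) (Fin n) ℚ) := by
    ext i j
    simp only [Matrix.mul_apply, Matrix.smul_apply, Matrix.one_apply, smul_eq_mul]
    by_cases hi : (i : ℕ) = n - 1
    · have hrow : ∀ k : Fin n, M i k * B k j = B k j := by
        intro k; rw [hM]; simp [hi]
      rw [Finset.sum_congr rfl (fun k _ => hrow k)]
      by_cases hj : (j : ℕ) < n - 1
      · have hij : i ≠ j := fun h => by rw [h] at hi; omega
        rw [if_neg hij, mul_zero]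
        have hBk : ∀ k : Fin n, B k j =
            if (k : ℕ) ≤ (j : ℕ) then (n : ℚ) - 1 - (j : ℕ) else -((j : ℕ) + 1) := by
          intro k; rw [hB, if_pos hj]
        rw [Finset.sum_congr rfl (fun k _ => hBk k)]
        rw [Fin.sum_univ_eq_sum_range
          (fun k => if k ≤ (j : ℕ) then (n : ℚ) - 1 - (j : ℕ) else -((j : ℕ) + 1))]
        have hsplit : (j : ℕ) + 1 ≤ n := by omega
        rw [Finset.range_eq_Ico,
          ← Finset.sum_Ico_consecutive _ (Nat.zero_le ((j : ℕ) + 1)) hsplit]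
        have h1 : ∑ k ∈ Finset.Ico 0 ((j : ℕ) + 1),
            (if k ≤ (j : ℕ) then (n : ℚ) - 1 - (j : ℕ) else -((j : ℕ) + 1))
            = ((j : ℕ) + 1 : ℕ) • ((n : ℚ) - 1 - (j : ℕ)) := by
          rw [Finset.sum_congr rfl (fun k hk => by
            rw [if_pos]; exact Nat.lt_succ_iff.mp (Finset.mem_Ico.mp hk).2)]
          simp [Finset.sum_const, Nat.card_Ico]; ring
        have h2 : ∑ k ∈ Finset.Ico ((j : ℕ) + 1) n,
            (if k ≤ (j : ℕ) then (n : ℚ) - 1 - (j : ℕ) else -((j : ℕ) + 1))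
            = (n - ((j : ℕ) + 1) : ℕ) • (-((j : ℕ) + 1 : ℚ)) := by
          rw [Finset.sum_congr rfl (fun k hk => by
            rw [if_neg]; have := (Finset.mem_Ico.mp hk).1; omega)]
          simp [Finset.sum_const, Nat.card_Ico]
        rw [h1, h2, nsmul_eq_mul, nsmul_eq_mul]
        have hc : ((n - ((j : ℕ) + 1) : ℕ) : ℚ) = (n : ℚ) - ((j : ℕ) + 1) := by
          push_cast [Nat.cast_sub hsplit]; ring
        rw [hc]; push_cast; ring
      · have hjv : (j : ℕ) = n - 1 := by have := j.isLt; omega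
        have hij : i = j := Fin.ext (by omega)
        rw [if_pos hij, mul_one]
        have hBk : ∀ k : Fin n, B k j = 1 := by
          intro k; rw [hB, if_neg (by omega)]
        rw [Finset.sum_congr rfl (fun k _ => hBk k)]
        simp [Finset.card_univ]
    · have hi' : (i : ℕ) + 1 < n := by have := i.isLt; omega
      set i' : Fin n := ⟨(i : ℕ) + 1, hi'⟩ with hi'def
      have hii' : i ≠ i' := by
        intro h; have := congrArg (Fin.val) h; simp [hi'def] at this
      have hterm : ∀ k : Fin n, M i k * B k j =
          (if k = i then B i j else 0) + (if k = i' then -(B i' j) else 0) := by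
        intro k
        rw [hM, if_neg hi]
        rcases eq_or_ne k i with hk | hk
        · simp [hk, hii', Ne.symm hii']
        · rcases eq_or_ne k i' with hk' | hk'
          · have hkv : (k : ℕ) = (i : ℕ) + 1 := by rw [hk']
            simp [hk', hk, hkv, hi'def, Ne.symm hii', Fin.ext_iff]
          · have hkv : (k : ℕ) ≠ (i : ℕ) + 1 := fun h => hk' (Fin.ext h)
            simp [hk, hk', hkv]
      rw [Finset.sum_congr rfl (fun k _ => hterm k), Finset.sum_add_distrib,
        Finset.sum_ite_eq' Finset.univ i (fun _ => B i j),
        Finset.sum_ite_eq' Finset.univ i' (fun _ => -(B i' j)),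
        if_pos (Finset.mem_univ i), if_pos (Finset.mem_univ i')]
      rw [hB i j, hB i' j]
      by_cases hj : (j : ℕ) < n - 1
      · simp only [hi'def, if_pos hj]
        by_cases h1 : (i : ℕ) ≤ (j : ℕ)
        · by_cases h2 : (i : ℕ) + 1 ≤ (j : ℕ)
          · have hij : i ≠ j := by intro h; rw [h] at h2; omega
            rw [if_pos h1, if_pos h2, if_neg hij]
            ring
          · have hij : i = j := Fin.ext (by omega)
            rw [if_pos h1, if_neg h2, if_pos hij]
            ring
        · have hij : i ≠ j := by intro h; rw [h] at h1; omega
          rw [if_neg h1, if_neg (by omega), if_neg hij]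
          ring
      · have hij : i ≠ j := by
          intro h; rw [h] at hi; have := j.isLt; omega
        rw [if_neg (by omega), if_neg (by simp [hi'def]; omega), if_neg hij]
        ring
  have h2 : ((n : ℚ)⁻¹ • M) * B = 1 := by
    rw [Matrix.smul_mul, key, smul_smul, inv_mul_cancel₀ hn0, one_smul]
  exact ⟨mul_eq_one_comm.mp h2, h2⟩
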